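/- Let N be a positive integer and T a positive real number, and for m = 0,…,N−1 define the chirp waveform ψ_m : [0,T] → ℂ by ψ_m(t) = exp(i·π/4)·exp(−i·π·(N/T²)·(t − m·T/N)²). Then for all m₁, m₂ in {0,…,N−1}, the integral ∫₀^T conj(ψ_{m₁}(t))·ψ_{m₂}(t) dt equals T if m₁ = m₂ and equals 0 otherwise. -/

import Mathlib

open Complex Real MeasureTheory

/-- The m-th continuous chirp waveform of an N-chirp OCDM system with symbol duration T:
ψ_m(t) = exp(i·π/4)·exp(−i·π·(N/T²)·(t − m·T/N)²). -/
noncomputable def chirp (N : ℕ) (T : ℝ) (m : Fin N) (t : ℝ) : ℂ :=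
  Complex.exp ((Real.pi / 4) * Complex.I) *
    Complex.exp (-(Real.pi * Complex.I * ((N : ℂ) / (T : ℂ) ^ 2) *
      ((t : ℂ) - ((m : ℕ) : ℂ) * T / N) ^ 2))

theorem stmt17 (N : ℕ) (hN : 0 < N) (T : ℝ) (hT : 0 < T) (m₁ m₂ : Fin N) :
    ∫ t in (0 : ℝ)..T, (starRingEnd ℂ) (chirp N T m₁ t) * chirp N T m₂ t =
      if m₁ = m₂ then (T : ℂ) else 0 := by
  have hN0 : ((N : ℂ)) ≠ 0 := Nat.cast_ne_zero.mpr hN.ne'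
  have hT0 : ((T : ℂ)) ≠ 0 := Complex.ofReal_ne_zero.mpr hT.ne'
  have key : ∀ t : ℝ, (starRingEnd ℂ) (chirp N T m₁ t) * chirp N T m₂ t =
      Complex.exp (Real.pi * Complex.I * (((m₁ : ℕ) : ℂ)^2 - ((m₂ : ℕ) : ℂ)^2) / N) *
        Complex.exp ((2 * Real.pi * Complex.I * (((m₂ : ℕ) : ℂ) - ((m₁ : ℕ) : ℂ)) / T) * t) := by
    intro t
    simp only [chirp, map_mul, ← Complex.exp_conj, map_neg, map_div₀, map_pow, map_sub,
      Complex.conj_I, Complex.conj_ofReal, map_natCast, map_ofNat]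
    rw [← Complex.exp_add, ← Complex.exp_add, ← Complex.exp_add, ← Complex.exp_add]
    congr 1
    field_simp
    ring
  simp only [key]
  rw [intervalIntegral.integral_const_mul]
  by_cases h : m₁ = m₂
  · subst h
    simp
  · have hne : (((m₂ : ℕ) : ℂ)) - ((m₁ : ℕ) : ℂ) ≠ 0 := by
      intro hc
      apply h
      have : ((m₁ : ℕ) : ℂ) = ((m₂ : ℕ) : ℂ) := by linear_combination -hc
      exact Fin.ext (Nat.cast_injective this)
    have hc : (2 * (Real.pi : ℂ) * Complex.I * (((m₂ : ℕ) : ℂ) - ((m₁ : ℕ) : ℂ)) / T) ≠ 0 := by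
      apply div_ne_zero _ hT0
      apply mul_ne_zero _ hne
      apply mul_ne_zero _ Complex.I_ne_zero
      apply mul_ne_zero two_ne_zero
      exact Complex.ofReal_ne_zero.mpr Real.pi_ne_zero
    rw [if_neg h, integral_exp_mul_complex hc]
    have : (2 * (Real.pi : ℂ) * Complex.I * (((m₂ : ℕ) : ℂ) - ((m₁ : ℕ) : ℂ)) / T) * T =
        (((((m₂ : ℕ) : ℤ) - ((m₁ : ℕ) : ℤ) : ℤ)) : ℂ) * (2 * Real.pi * Complex.I) := by
      push_cast
      field_simp
    rw [this, Complex.exp_int_mul_two_pi_mul_I]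
    simp
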